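/- For every real h ≥ 0 there exist reals k ≥ 0 and R ≥ 0, depending only on h, such that the following holds. Let G be a connected simple graph with vertex set V, and suppose that for every pair of vertices x, y ∈ V there is given a set L(x,y) ⊆ V containing x and y such that: (i) the subgraph of G induced on L(x,y) is connected; (ii) whenever d_G(x,y) ≤ 1, the diameter of L(x,y) in the graph metric is at most h; (iii) for all x, y, z ∈ V, L(x,y) ⊆ N_G(L(x,z) ∪ L(y,z), h). Then the vertex set V with the graph metric d_G is k-hyperbolic in the sense of Gromov, and moreover, for all x, y ∈ V, the Hausdorff distance (with respect to d_G) between L(x,y) and the vertex set of any geodesic from x to y is at most R. -/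

import Mathlib

namespace DGHP

open SimpleGraph

variable {V : Type} {G : SimpleGraph V}

lemma subwalk_exists {x y : V} (p : G.Walk x y) :
    ∀ i j, i ≤ j → j ≤ p.length →
    ∃ q : G.Walk (p.getVert i) (p.getVert j), q.length = j - i ∧
      ∀ u ∈ q.support, u ∈ p.support := by
  induction p with
  | nil =>
    intro i j hij hj
    simp only [SimpleGraph.Walk.length_nil, Nat.le_zero] at hj
    subst hj
    interval_cases i
    exact ⟨SimpleGraph.Walk.nil, by simp, by simp⟩
  | @cons a b c hadj p ih =>
    intro i j hij hj
    match i, j with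
    | 0, 0 => exact ⟨SimpleGraph.Walk.nil, by simp, by
        intro u hu; simp at hu; subst hu; simp [SimpleGraph.Walk.support_cons]⟩
    | 0, (j+1) =>
      obtain ⟨q, hq1, hq2⟩ := ih 0 j (Nat.zero_le _) (by
        simpa [SimpleGraph.Walk.length_cons] using hj)
      refine ⟨SimpleGraph.Walk.cons hadj (q.copy (p.getVert_zero) rfl), by
        have h1 : (q.copy (p.getVert_zero) rfl).length = j := (by simpa using hq1); exact congrArg (· + 1) h1, ?_⟩
      intro u hu
      change u ∈ _ :: _ at hu
      rcases List.mem_cons.mp hu with h | h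
      · subst h; simp [SimpleGraph.Walk.support_cons]
      · change u ∈ (q.copy (p.getVert_zero) rfl).support at h
        rw [SimpleGraph.Walk.support_copy] at h
        simp [SimpleGraph.Walk.support_cons]
        exact Or.inr (hq2 u h)
    | (i+1), (j+1) =>
      obtain ⟨q, hq1, hq2⟩ := ih i j (Nat.le_of_succ_le_succ hij) (by
        simpa [SimpleGraph.Walk.length_cons] using hj)
      refine ⟨q, by simpa using hq1, ?_⟩
      intro u hu
      simp [SimpleGraph.Walk.support_cons]
      exact Or.inr (hq2 u hu)

variable (hG : G.Connected)
include hG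

/-- positions along a geodesic -/
lemma geo_getVert {x y : V} (p : G.Walk x y) (hp : p.length = G.dist x y)
    {j : ℕ} (hj : j ≤ p.length) :
    G.dist x (p.getVert j) = j ∧ G.dist (p.getVert j) y = p.length - j := by
  obtain ⟨q1, hq1, _⟩ := subwalk_exists p 0 j (Nat.zero_le _) hj
  obtain ⟨q2, hq2, _⟩ := subwalk_exists p j p.length hj le_rfl
  have d1 : G.dist x (p.getVert j) ≤ j := by
    have := SimpleGraph.dist_le (q1.copy (p.getVert_zero) rfl)
    simpa [hq1] using this
  have d2 : G.dist (p.getVert j) y ≤ p.length - j := by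
    have := SimpleGraph.dist_le (q2.copy rfl (p.getVert_length))
    simpa [hq2] using this
  have tri : G.dist x y ≤ G.dist x (p.getVert j) + G.dist (p.getVert j) y :=
    hG.dist_triangle
  omega

lemma geo_support_dist {x y : V} (p : G.Walk x y) (hp : p.length = G.dist x y)
    {u : V} (hu : u ∈ p.support) :
    G.dist x u + G.dist u y = G.dist x y := by
  obtain ⟨i, hiu, hi⟩ := SimpleGraph.Walk.mem_support_iff_exists_getVert.mp hu
  obtain ⟨e1, e2⟩ := geo_getVert hG p hp hi
  rw [hiu] at e1 e2
  omega

lemma geo_dist_between {x y : V} (p : G.Walk x y) (hp : p.length = G.dist x y)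
    {u w : V} (hu : u ∈ p.support) (hw : w ∈ p.support)
    (huw : G.dist x u ≤ G.dist x w) :
    G.dist u w = G.dist x w - G.dist x u := by
  obtain ⟨i, hiu, hi⟩ := SimpleGraph.Walk.mem_support_iff_exists_getVert.mp hu
  obtain ⟨i', hiw, hi'⟩ := SimpleGraph.Walk.mem_support_iff_exists_getVert.mp hw
  have e1 := (geo_getVert hG p hp hi).1
  have e2 := (geo_getVert hG p hp hi').1
  rw [hiu] at e1; rw [hiw] at e2
  have hii : i ≤ i' := by omega
  obtain ⟨q, hq1, _⟩ := subwalk_exists p i i' hii hi'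
  have dle : G.dist u w ≤ i' - i := by
    have := SimpleGraph.dist_le (q.copy hiu hiw)
    simpa [hq1] using this
  have tri : G.dist x w ≤ G.dist x u + G.dist u w := hG.dist_triangle
  omega


omit hG in
lemma arith_lemma (h2 j : ℕ) (h1 : 1 ≤ h2) (hj : 2*h2 + 21 ≤ j) :
    12*(j+5)*h2 ≤ 2^j := by
  set m := j - (h2 + 9) with hm
  have hjm : j = (h2 + 9) + m := by omega
  have hm12 : h2 + 12 ≤ m := by omega
  have e0 : h2 + 1 ≤ 2 ^ h2 := Nat.lt_two_pow_self
  have e1 : 512 * (h2+1) ≤ 2 ^ (h2 + 9) := by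
    rw [pow_add]
    calc 512 * (h2+1) = (h2+1) * 512 := by ring
    _ ≤ 2 ^ h2 * 512 := Nat.mul_le_mul_right _ e0
    _ = 2 ^ h2 * 2 ^ 9 := by norm_num
  have e2 : m + 1 ≤ 2 ^ m := Nat.lt_two_pow_self
  have key : 512 * (h2+1) * (m+1) ≤ 2 ^ (h2+9) * 2 ^ m := Nat.mul_le_mul e1 e2
  have e3 : 2 ^ j = 2 ^ (h2+9) * 2 ^ m := by rw [hjm, pow_add]
  rw [e3]
  refine le_trans ?_ key
  have h24 : 12*(j+5) <= 24*(m+1) := by omega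
  calc 12*(j+5)*h2 ≤ (24*(m+1))*h2 := Nat.mul_le_mul_right _ h24
  _ = (24*h2)*(m+1) := by ring
  _ ≤ (512*(h2+1))*(m+1) := Nat.mul_le_mul_right _ (by omega)

section Main

variable {L : V → V → Set V} {h' : ℕ}
variable (hmem : ∀ x y : V, x ∈ L x y ∧ y ∈ L x y)
variable (hdiam : ∀ x y : V, G.dist x y ≤ 1 → ∀ a ∈ L x y, ∀ b ∈ L x y, G.dist a b ≤ h')
variable (hslim : ∀ x y z : V, ∀ a ∈ L x y, ∃ b ∈ L x z ∪ L y z, G.dist a b ≤ h')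
include hmem hdiam hslim

lemma log_lemma : ∀ (j : ℕ) (x y : V) (p : G.Walk x y), p.length = G.dist x y →
    G.dist x y ≤ 2^j → ∀ a ∈ L x y, ∃ u ∈ p.support, G.dist a u ≤ (j+1)*h' := by
  intro j
  induction j with
  | zero =>
    intro x y p hp hxy a ha
    refine ⟨x, p.start_mem_support, ?_⟩
    have := hdiam x y (by simpa using hxy) a ha x (hmem x y).1
    simpa using this
  | succ j ih =>
    intro x y p hp hxy a ha
    by_cases hsmall : G.dist x y ≤ 2^j
    · obtain ⟨u, hu, hdu⟩ := ih x y p hp hsmall a ha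
      refine ⟨u, hu, le_trans hdu (Nat.mul_le_mul_right _ (by omega))⟩
    · have hplen : p.length = G.dist x y := hp
      have h2pow : G.dist x y ≤ 2 * 2^j := by
        have : (2:ℕ)^(j+1) = 2 * 2^j := by ring
        omega
      set m := G.dist x y / 2 with hmdef
      have hmn : m ≤ G.dist x y := Nat.div_le_self _ _
      obtain ⟨q0, hq0len, hq0sub⟩ := subwalk_exists p 0 m (Nat.zero_le _) (by omega)
      obtain ⟨q3, hq3len, hq3sub⟩ := subwalk_exists p m p.length (by omega) le_rfl
      have e1 := (geo_getVert hG p hp (j := m) (by omega)).1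
      have e2 := (geo_getVert hG p hp (j := m) (by omega)).2
      obtain ⟨b, hb, hab⟩ := hslim x y (p.getVert m) a ha
      rw [Set.mem_union] at hb
      rcases hb with hb | hb
      · have hq1geo : (q0.copy p.getVert_zero rfl).length = G.dist x (p.getVert m) := by
          simp [hq0len, e1]
        obtain ⟨u, hu, hbu⟩ := ih x (p.getVert m) (q0.copy p.getVert_zero rfl) hq1geo
          (by omega) b hb
        refine ⟨u, hq0sub u (by simpa using hu), ?_⟩
        calc G.dist a u ≤ G.dist a b + G.dist b u := hG.dist_triangle
        _ ≤ h' + (j+1)*h' := Nat.add_le_add hab hbu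
        _ = (j+1+1)*h' := by ring
      · have hq2geo : ((q3.copy rfl p.getVert_length).reverse).length
            = G.dist y (p.getVert m) := by
          rw [SimpleGraph.dist_comm]
          simp [hq3len]
          omega
        obtain ⟨u, hu, hbu⟩ := ih y (p.getVert m) ((q3.copy rfl p.getVert_length).reverse)
          hq2geo (by rw [SimpleGraph.dist_comm]; omega) b hb
        refine ⟨u, hq3sub u ?_, ?_⟩
        · rw [SimpleGraph.Walk.support_reverse] at hu
          simpa using List.mem_reverse.mp hu
        · calc G.dist a u ≤ G.dist a b + G.dist b u := hG.dist_triangle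
          _ ≤ h' + (j+1)*h' := Nat.add_le_add hab hbu
          _ = (j+1+1)*h' := by ring

set_option maxHeartbeats 2000000 in
lemma dir1 : ∀ (n : ℕ) (x y : V) (p : G.Walk x y), p.length = G.dist x y →
    G.dist x y = n → ∀ a ∈ L x y, ∃ u ∈ p.support, G.dist a u ≤ (2*h'+26)*(h'+1) := by
  intro n
  induction n using Nat.strong_induction_on with
  | _ n ih =>
  intro x y p hp hn a ha
  classical
  set C := (2*h'+26)*(h'+1) with hC
  have hCh : 8*h' + 26 ≤ C := by rw [hC]; nlinarith
  by_cases hn1 : n ≤ 1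
  · refine ⟨x, p.start_mem_support, ?_⟩
    have := hdiam x y (by omega) a ha x (hmem x y).1
    omega
  obtain ⟨v, hv, hmin⟩ : ∃ v ∈ p.support, ∀ u ∈ p.support, G.dist a v ≤ G.dist a u := by
    obtain ⟨v, hv, hm⟩ := p.support.toFinset.exists_min_image (G.dist a)
      ⟨x, List.mem_toFinset.mpr p.start_mem_support⟩
    exact ⟨v, List.mem_toFinset.mp hv, fun u hu => hm u (List.mem_toFinset.mpr hu)⟩
  by_cases hrC : G.dist a v ≤ C
  · exact ⟨v, hv, hrC⟩
  push_neg at hrC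
  exfalso
  set r := G.dist a v with hr
  set t := G.dist x v with ht
  have htvy := geo_support_dist hG p hp hv
  have htn : t ≤ n := by omega
  set K := r + 2*h' + C + 1 with hK
  have hplen : p.length = n := by omega
  set i1 := t - K with hi1
  set m2 := min (t+K) n with hm2
  have hi1m2 : i1 ≤ m2 := by omega
  have e1 := (geo_getVert hG p hp (j := i1) (by omega)).1
  have e2 := (geo_getVert hG p hp (j := m2) (by omega)).1
  have e2' := (geo_getVert hG p hp (j := m2) (by omega)).2
  have hx'p : p.getVert i1 ∈ p.support :=
    SimpleGraph.Walk.mem_support_iff_exists_getVert.mpr ⟨i1, rfl, by omega⟩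
  have hy'p : p.getVert m2 ∈ p.support :=
    SimpleGraph.Walk.mem_support_iff_exists_getVert.mpr ⟨m2, rfl, by omega⟩
  obtain ⟨b₁, hb₁, hab₁⟩ := hslim x y (p.getVert i1) a ha
  rw [Set.mem_union] at hb₁
  rcases hb₁ with hb₁ | hb₁
  · -- CASE 1 : b₁ ∈ L x x'
    by_cases htK : t ≤ K
    · -- x' = x
      have hx'x : p.getVert i1 = x := by
        have : i1 = 0 := by omega
        rw [this, p.getVert_zero]
      rw [hx'x] at hb₁
      have hbx : G.dist b₁ x ≤ h' :=
        hdiam x x (by simp [SimpleGraph.dist_self]) b₁ hb₁ x (hmem x x).1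
      have h1 : G.dist a x ≤ G.dist a b₁ + G.dist b₁ x := hG.dist_triangle
      have h2 : r ≤ G.dist a x := hmin x p.start_mem_support
      omega
    · push_neg at htK
      obtain ⟨q0, hq0len, hq0sub⟩ := subwalk_exists p 0 i1 (Nat.zero_le _) (by omega)
      have hq1geo : (q0.copy p.getVert_zero rfl).length = G.dist x (p.getVert i1) := by
        simp [hq0len, e1]
      obtain ⟨u, hu, hbu⟩ := ih i1 (by omega) x (p.getVert i1) (q0.copy p.getVert_zero rfl)
        hq1geo (by omega) b₁ hb₁
      have hup : u ∈ p.support := hq0sub u (by simpa using hu)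
      have hs := geo_support_dist hG (q0.copy p.getVert_zero rfl) hq1geo hu
      rw [e1] at hs
      have tri1 : G.dist x v ≤ G.dist x u + G.dist u v := hG.dist_triangle
      have tri2 : G.dist u v ≤ G.dist u a + G.dist a v := hG.dist_triangle
      have hc1 : G.dist u a = G.dist a u := SimpleGraph.dist_comm
      have hau : G.dist a u ≤ G.dist a b₁ + G.dist b₁ u := hG.dist_triangle
      have hxuxx' : G.dist x u ≤ i1 := by omega
      omega
  · -- b₁ ∈ L y x' ; split at y'
    obtain ⟨b, hb, hb₁b⟩ := hslim y (p.getVert i1) (p.getVert m2) b₁ hb₁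
    have hab : G.dist a b ≤ 2*h' := by
      have : G.dist a b ≤ G.dist a b₁ + G.dist b₁ b := hG.dist_triangle
      omega
    rw [Set.mem_union] at hb
    rcases hb with hb | hb
    · -- CASE 2 : b ∈ L y y'
      by_cases htK2 : n ≤ t + K
      · have hy'y : p.getVert m2 = y := by
          have : m2 = p.length := by omega
          rw [this, p.getVert_length]
        rw [hy'y] at hb
        have hby : G.dist b y ≤ h' :=
          hdiam y y (by simp [SimpleGraph.dist_self]) b hb y (hmem y y).1
        have h1 : G.dist a y ≤ G.dist a b + G.dist b y := hG.dist_triangle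
        have h2 : r ≤ G.dist a y := hmin y p.end_mem_support
        omega
      · push_neg at htK2
        obtain ⟨q3, hq3len, hq3sub⟩ := subwalk_exists p m2 p.length (by omega) le_rfl
        have hq2geo : (q3.copy rfl p.getVert_length).length = G.dist (p.getVert m2) y := by
          simp [hq3len]; omega
        have hq2rgeo : ((q3.copy rfl p.getVert_length).reverse).length
            = G.dist y (p.getVert m2) := by
          rw [SimpleGraph.dist_comm]; simpa using hq2geo
        obtain ⟨u, hu, hbu⟩ := ih (n - m2) (by omega) y (p.getVert m2)
          ((q3.copy rfl p.getVert_length).reverse) hq2rgeo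
          (by rw [SimpleGraph.dist_comm]; omega) b hb
        have huq : u ∈ (q3.copy rfl p.getVert_length).support := by
          rw [SimpleGraph.Walk.support_reverse] at hu
          exact List.mem_reverse.mp hu
        have hup : u ∈ p.support := hq3sub u (by simpa using huq)
        have hs := geo_support_dist hG (q3.copy rfl p.getVert_length) hq2geo huq
        rw [e2'] at hs
        have hs2 := geo_support_dist hG p hp hup
        have tri1 : G.dist x u ≤ G.dist x v + G.dist v u := hG.dist_triangle
        have tri2 : G.dist v u ≤ G.dist v a + G.dist a u := hG.dist_triangle
        have hc1 : G.dist v a = G.dist a v := SimpleGraph.dist_comm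
        have hau : G.dist a u ≤ G.dist a b + G.dist b u := hG.dist_triangle
        omega
    · -- CASE 3 : b ∈ L x' y'
      have e3 : G.dist (p.getVert i1) (p.getVert m2) = m2 - i1 := by
        have := geo_dist_between hG p hp hx'p hy'p (by omega)
        omega
      obtain ⟨q4, hq4len, hq4sub⟩ := subwalk_exists p i1 m2 hi1m2 (by omega)
      have hq4geo : q4.length = G.dist (p.getVert i1) (p.getVert m2) := by omega
      set j := Nat.clog 2 (2*K) with hj
      have hle : 2*K ≤ 2^j := Nat.le_pow_clog (by norm_num) _
      obtain ⟨u, hu, hbu⟩ := log_lemma hG hmem hdiam hslim j (p.getVert i1) (p.getVert m2)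
        q4 hq4geo (by omega) b hb
      have hup : u ∈ p.support := hq4sub u hu
      have hau : G.dist a u ≤ G.dist a b + G.dist b u := hG.dist_triangle
      have hru : r ≤ G.dist a u := hmin u hup
      have hjpos : 0 < j := Nat.clog_pos (by norm_num) (by omega)
      have hlt : 2^(j-1) < 2*K := by
        have := Nat.pow_pred_clog_lt_self (b := 2) (x := 2*K) (by norm_num) (by omega)
        rwa [Nat.pred_eq_sub_one, ← hj] at this
      have h2j : 2^j = 2 * 2^(j-1) := by
        conv_lhs => rw [show j = (j-1)+1 by omega]
        ring
      -- r ≤ (j+3)*(h'+1)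
      have hr3 : r ≤ (j+3)*(h'+1) := by
        have : (2:ℕ)*h' + (j+1)*h' ≤ (j+3)*(h'+1) := by nlinarith
        omega
      have hjge : 2*(h'+1) + 22 ≤ j := by
        by_contra hcon
        push_neg at hcon
        have hmul : (j+3)*(h'+1) ≤ (2*(h'+1)+24)*(h'+1) := Nat.mul_le_mul_right _ (by omega)
        have hCeq : (2*(h'+1)+24)*(h'+1) = C := by rw [hC]; ring
        rw [hCeq] at hmul
        omega
      have harith := arith_lemma (h'+1) j (by omega) (by omega)
      have hX : K ≤ 2*((j+3)*(h'+1)) + 2*h' + 1 := by omega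
      have hY : 8*((j+3)*(h'+1)) + 8*h' + 4 ≤ 12*(j+5)*(h'+1) := by nlinarith
      omega


variable (hconn : ∀ x y : V, (G.induce (L x y)).Connected)
include hconn

set_option maxHeartbeats 1000000 in
lemma dir2 (x y : V) (p : G.Walk x y) (hp : p.length = G.dist x y) :
    ∀ v ∈ p.support, ∃ a ∈ L x y, G.dist v a ≤ 3*((2*h'+26)*(h'+1)) + 1 := by
  intro v hv
  set C := (2*h'+26)*(h'+1) with hC
  set T := G.dist x v with hT
  have hTn := geo_support_dist hG p hp hv
  have key : ∀ (c d : ↥(L x y)) (W : (G.induce (L x y)).Walk c d),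
      ∀ u ∈ p.support, G.dist (c : V) u ≤ C → G.dist x u ≤ T → (d : V) = y →
      ∃ a ∈ L x y, G.dist v a ≤ 3*C + 1 := by
    intro c d W
    induction W with
    | nil =>
      intro u hup hcu hxu hd
      rw [hd] at hcu
      refine ⟨y, (hmem x y).2, ?_⟩
      have h1 := geo_support_dist hG p hp hup
      have hcomm : G.dist u y = G.dist y u := SimpleGraph.dist_comm
      have hvy : G.dist v y ≥ 0 := Nat.zero_le _
      omega
    | @cons c c₁ d hadj W' ih =>
      intro u hup hcu hxu hd
      obtain ⟨u₁, hu₁p, hcu₁⟩ := dir1 hG hmem hdiam hslim (G.dist x y) x y p hp rfl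
        (c₁ : V) c₁.2
      by_cases hle : G.dist x u₁ ≤ T
      · exact ih u₁ hu₁p hcu₁ hle hd
      · push_neg at hle
        refine ⟨(c₁ : V), c₁.2, ?_⟩
        have hdvu₁ : G.dist v u₁ = G.dist x u₁ - T := by
          have := geo_dist_between hG p hp hv hu₁p (by omega)
          omega
        have hduu₁ : G.dist u u₁ = G.dist x u₁ - G.dist x u := by
          have := geo_dist_between hG p hp hup hu₁p (by omega)
          omega
        have hadj' : G.Adj (c : V) (c₁ : V) := hadj
        have hdcc₁ : G.dist (c : V) (c₁ : V) ≤ 1 := by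
          have := SimpleGraph.dist_le (SimpleGraph.Walk.cons hadj' SimpleGraph.Walk.nil)
          simpa using this
        have t1 : G.dist u u₁ ≤ G.dist u (c : V) + G.dist (c : V) u₁ := hG.dist_triangle
        have t2 : G.dist (c : V) u₁ ≤ G.dist (c : V) (c₁ : V) + G.dist (c₁ : V) u₁ :=
          hG.dist_triangle
        have c1 : G.dist u (c : V) = G.dist (c : V) u := SimpleGraph.dist_comm
        have c2 : G.dist (c₁ : V) u₁ = G.dist u₁ (c₁ : V) := SimpleGraph.dist_comm
        have t3 : G.dist v (c₁ : V) ≤ G.dist v u₁ + G.dist u₁ (c₁ : V) := hG.dist_triangle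
        omega
  obtain ⟨W⟩ := (hconn x y).preconnected ⟨x, (hmem x y).1⟩ ⟨y, (hmem x y).2⟩
  exact key ⟨x, (hmem x y).1⟩ ⟨y, (hmem x y).2⟩ W x p.start_mem_support
    (by simp [SimpleGraph.dist_self]) (by simp [SimpleGraph.dist_self]) rfl

lemma trans_pt (x y w : V) :
    ∃ c ∈ L x y, (∃ b₁ ∈ L x w, G.dist c b₁ ≤ h') ∧ (∃ b₂ ∈ L y w, G.dist c b₂ ≤ 2*h' + 1) := by
  have key : ∀ (c d : ↥(L x y)) (_W : (G.induce (L x y)).Walk c d),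
      (∃ b₁ ∈ L x w, G.dist (c : V) b₁ ≤ h') → (d : V) = y →
      ∃ c' ∈ L x y, (∃ b₁ ∈ L x w, G.dist c' b₁ ≤ h') ∧
        (∃ b₂ ∈ L y w, G.dist c' b₂ ≤ 2*h' + 1) := by
    intro c d W
    induction W with
    | nil =>
      intro hP hd
      rw [hd] at hP
      exact ⟨y, (hmem x y).2, hP, ⟨y, (hmem y w).1, by simp [SimpleGraph.dist_self]⟩⟩
    | @cons c c₁ d hadj W' ih =>
      intro hP hd
      by_cases hP1 : ∃ b₁ ∈ L x w, G.dist (c₁ : V) b₁ ≤ h'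
      · exact ih hP1 hd
      · obtain ⟨b, hb, hcb⟩ := hslim x y w (c₁ : V) c₁.2
        rw [Set.mem_union] at hb
        rcases hb with hb | hb
        · exact absurd ⟨b, hb, hcb⟩ hP1
        · refine ⟨(c : V), c.2, hP, ⟨b, hb, ?_⟩⟩
          have hadj' : G.Adj (c : V) (c₁ : V) := hadj
          have hdcc₁ : G.dist (c : V) (c₁ : V) ≤ 1 := by
            have := SimpleGraph.dist_le (SimpleGraph.Walk.cons hadj' SimpleGraph.Walk.nil)
            simpa using this
          have t1 : G.dist (c : V) b ≤ G.dist (c : V) (c₁ : V) + G.dist (c₁ : V) b :=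
            hG.dist_triangle
          omega
  obtain ⟨W⟩ := (hconn x y).preconnected ⟨x, (hmem x y).1⟩ ⟨y, (hmem x y).2⟩
  exact key ⟨x, (hmem x y).1⟩ ⟨y, (hmem x y).2⟩ W
    ⟨x, (hmem x w).1, by simp [SimpleGraph.dist_self]⟩ rfl

set_option maxHeartbeats 1000000 in
lemma hyp_case (w x y z : V) :
    G.dist x w + G.dist z w + G.dist x y ≤
        G.dist x z + G.dist x w + G.dist y w + 2*(3*((2*h'+26)*(h'+1)) + 5*h' + 2) ∨
    G.dist y w + G.dist z w + G.dist x y ≤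
        G.dist y z + G.dist x w + G.dist y w + 2*(3*((2*h'+26)*(h'+1)) + 5*h' + 2) := by
  set C := (2*h'+26)*(h'+1) with hC
  obtain ⟨c, hc, ⟨b₁, hb₁, hcb₁⟩, ⟨b₂, hb₂, hcb₂⟩⟩ := trans_pt hG hmem hdiam hslim hconn x y w
  obtain ⟨q₁, hq₁⟩ := hG.exists_walk_length_eq_dist x w
  obtain ⟨u₁, hu₁, hbu₁⟩ := dir1 hG hmem hdiam hslim (G.dist x w) x w q₁ hq₁ rfl b₁ hb₁
  have f₁ := geo_support_dist hG q₁ hq₁ hu₁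
  obtain ⟨q₂, hq₂⟩ := hG.exists_walk_length_eq_dist y w
  obtain ⟨u₂, hu₂, hbu₂⟩ := dir1 hG hmem hdiam hslim (G.dist y w) y w q₂ hq₂ rfl b₂ hb₂
  have f₂ := geo_support_dist hG q₂ hq₂ hu₂
  have t1 : G.dist w c ≤ G.dist w u₁ + G.dist u₁ c := hG.dist_triangle
  have t2 : G.dist u₁ c ≤ G.dist u₁ b₁ + G.dist b₁ c := hG.dist_triangle
  have c1 : G.dist u₁ b₁ = G.dist b₁ u₁ := SimpleGraph.dist_comm
  have c2 : G.dist b₁ c = G.dist c b₁ := SimpleGraph.dist_comm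
  have c3 : G.dist w u₁ = G.dist u₁ w := SimpleGraph.dist_comm
  have t3 : G.dist x c ≤ G.dist x u₁ + G.dist u₁ c := hG.dist_triangle
  have t4 : G.dist w c ≤ G.dist w u₂ + G.dist u₂ c := hG.dist_triangle
  have t5 : G.dist u₂ c ≤ G.dist u₂ b₂ + G.dist b₂ c := hG.dist_triangle
  have c4 : G.dist u₂ b₂ = G.dist b₂ u₂ := SimpleGraph.dist_comm
  have c5 : G.dist b₂ c = G.dist c b₂ := SimpleGraph.dist_comm
  have c6 : G.dist w u₂ = G.dist u₂ w := SimpleGraph.dist_comm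
  have t6 : G.dist y c ≤ G.dist y u₂ + G.dist u₂ c := hG.dist_triangle
  have t7 : G.dist x y ≤ G.dist x c + G.dist c y := hG.dist_triangle
  have c7 : G.dist c y = G.dist y c := SimpleGraph.dist_comm
  -- E : 2*dist w c + dist x y ≤ dist x w + dist y w + 4*(C + 2*h' + 1)
  have E : 2*(G.dist w c) + G.dist x y ≤ G.dist x w + G.dist y w + 4*(C + 2*h' + 1) := by
    omega
  obtain ⟨b, hb, hcb⟩ := hslim x y z c hc
  rw [Set.mem_union] at hb
  rcases hb with hb | hb
  · left
    obtain ⟨q₃, hq₃⟩ := hG.exists_walk_length_eq_dist x z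
    obtain ⟨u₃, hu₃, hbu₃⟩ := dir1 hG hmem hdiam hslim (G.dist x z) x z q₃ hq₃ rfl b hb
    have f₃ := geo_support_dist hG q₃ hq₃ hu₃
    have s1 : G.dist x w ≤ G.dist x u₃ + G.dist u₃ w := hG.dist_triangle
    have s2 : G.dist z w ≤ G.dist z u₃ + G.dist u₃ w := hG.dist_triangle
    have d1 : G.dist z u₃ = G.dist u₃ z := SimpleGraph.dist_comm
    have s3 : G.dist u₃ w ≤ G.dist u₃ c + G.dist c w := hG.dist_triangle
    have s4 : G.dist u₃ c ≤ G.dist u₃ b + G.dist b c := hG.dist_triangle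
    have d2 : G.dist u₃ b = G.dist b u₃ := SimpleGraph.dist_comm
    have d3 : G.dist b u₃ = G.dist u₃ b := SimpleGraph.dist_comm
    have d4 : G.dist b c = G.dist c b := SimpleGraph.dist_comm
    have d5 : G.dist c w = G.dist w c := SimpleGraph.dist_comm
    have d6 : G.dist b u₃ ≤ C := hbu₃
    omega
  · right
    obtain ⟨q₃, hq₃⟩ := hG.exists_walk_length_eq_dist y z
    obtain ⟨u₃, hu₃, hbu₃⟩ := dir1 hG hmem hdiam hslim (G.dist y z) y z q₃ hq₃ rfl b hb
    have f₃ := geo_support_dist hG q₃ hq₃ hu₃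
    have s1 : G.dist y w ≤ G.dist y u₃ + G.dist u₃ w := hG.dist_triangle
    have s2 : G.dist z w ≤ G.dist z u₃ + G.dist u₃ w := hG.dist_triangle
    have d1 : G.dist z u₃ = G.dist u₃ z := SimpleGraph.dist_comm
    have s3 : G.dist u₃ w ≤ G.dist u₃ c + G.dist c w := hG.dist_triangle
    have s4 : G.dist u₃ c ≤ G.dist u₃ b + G.dist b c := hG.dist_triangle
    have d3 : G.dist b u₃ = G.dist u₃ b := SimpleGraph.dist_comm
    have d4 : G.dist b c = G.dist c b := SimpleGraph.dist_comm
    have d5 : G.dist c w = G.dist w c := SimpleGraph.dist_comm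
    have d6 : G.dist b u₃ ≤ C := hbu₃
    omega

end Main

end DGHP


/-- For every real `h ≥ 0` there exist `k, R ≥ 0` (depending only on `h`)
such that: for any connected simple graph `G` on `V` and any family of sets
`L x y ⊆ V` containing `x` and `y` with (i) the induced subgraph on `L x y` connected,
(ii) diameter of `L x y` at most `h` whenever `d_G(x,y) ≤ 1`, and
(iii) `L x y ⊆ N_G(L x z ∪ L y z, h)` for all `x y z`, the graph metric on `V` is
`k`-hyperbolic in the sense of Gromov, and for all `x, y` the Hausdorff distance between
`L x y` and the vertex set of any geodesic from `x` to `y` is at most `R`. -/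
theorem disc_graph_hyperbolicity_criterion_connected :
    ∀ h : ℝ, 0 ≤ h → ∃ k R : ℝ, 0 ≤ k ∧ 0 ≤ R ∧
      ∀ (V : Type) (G : SimpleGraph V), G.Connected →
      ∀ L : V → V → Set V,
      (∀ x y : V, x ∈ L x y ∧ y ∈ L x y) →
      -- (i) the induced subgraph on `L x y` is connected
      (∀ x y : V, (G.induce (L x y)).Connected) →
      -- (ii) diameter bound for adjacent or equal endpoints
      (∀ x y : V, (G.dist x y : ℝ) ≤ 1 →
        ∀ a ∈ L x y, ∀ b ∈ L x y, (G.dist a b : ℝ) ≤ h) →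
      -- (iii) the slim-triangles condition
      (∀ x y z : V, ∀ a ∈ L x y,
        ∃ b ∈ L x z ∪ L y z, (G.dist a b : ℝ) ≤ h) →
      -- conclusion: Gromov hyperbolicity of the graph metric ...
      ((∀ w x y z : V,
          ((G.dist x w : ℝ) + (G.dist y w : ℝ) - (G.dist x y : ℝ)) / 2 ≥
            min (((G.dist x w : ℝ) + (G.dist z w : ℝ) - (G.dist x z : ℝ)) / 2)
                (((G.dist y w : ℝ) + (G.dist z w : ℝ) - (G.dist y z : ℝ)) / 2) - k) ∧
        -- ... and the Hausdorff-distance bound for geodesics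
        (∀ x y : V, ∀ p : G.Walk x y, p.length = G.dist x y →
          (∀ a ∈ L x y, ∃ v ∈ p.support, (G.dist a v : ℝ) ≤ R) ∧
          (∀ v ∈ p.support, ∃ a ∈ L x y, (G.dist v a : ℝ) ≤ R))) := by
  intro h h0
  refine ⟨((3*((2*⌈h⌉₊+26)*(⌈h⌉₊+1)) + 5*⌈h⌉₊ + 2 : ℕ) : ℝ),
          ((3*((2*⌈h⌉₊+26)*(⌈h⌉₊+1)) + 1 : ℕ) : ℝ), Nat.cast_nonneg _, Nat.cast_nonneg _, ?_⟩
  intro V G hG L hmem hconn hdiam hslim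
  set h' : ℕ := ⌈h⌉₊ with hh'
  have hdiam' : ∀ x y : V, G.dist x y ≤ 1 → ∀ a ∈ L x y, ∀ b ∈ L x y, G.dist a b ≤ h' := by
    intro x y hxy a ha b hb
    have h1 := hdiam x y (by exact_mod_cast hxy) a ha b hb
    have h2 : (G.dist a b : ℝ) ≤ (h' : ℝ) := le_trans h1 (Nat.le_ceil h)
    exact_mod_cast h2
  have hslim' : ∀ x y z : V, ∀ a ∈ L x y, ∃ b ∈ L x z ∪ L y z, G.dist a b ≤ h' := by
    intro x y z a ha
    obtain ⟨b, hb, hab⟩ := hslim x y z a ha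
    refine ⟨b, hb, ?_⟩
    have h2 : (G.dist a b : ℝ) ≤ (h' : ℝ) := le_trans hab (Nat.le_ceil h)
    exact_mod_cast h2
  constructor
  · intro w x y z
    rcases DGHP.hyp_case hG hmem hdiam' hslim' hconn w x y z with hc | hc
    · refine le_trans (sub_le_sub_right (min_le_left _ _) _) ?_
      have hcast : (G.dist x w + G.dist z w + G.dist x y : ℝ) ≤
          (G.dist x z : ℝ) + G.dist x w + G.dist y w +
          2*((3*((2*h'+26)*(h'+1)) + 5*h' + 2 : ℕ) : ℝ) := by
        exact_mod_cast hc
      push_cast at hcast ⊢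
      linarith
    · refine le_trans (sub_le_sub_right (min_le_right _ _) _) ?_
      have hcast : (G.dist y w + G.dist z w + G.dist x y : ℝ) ≤
          (G.dist y z : ℝ) + G.dist x w + G.dist y w +
          2*((3*((2*h'+26)*(h'+1)) + 5*h' + 2 : ℕ) : ℝ) := by
        exact_mod_cast hc
      push_cast at hcast ⊢
      linarith
  · intro x y p hplen
    refine ⟨?_, ?_⟩
    · intro a ha
      obtain ⟨u, hu, hau⟩ := DGHP.dir1 hG hmem hdiam' hslim' (G.dist x y) x y p hplen rfl a ha
      refine ⟨u, hu, ?_⟩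
      have hle : G.dist a u ≤ 3*((2*h'+26)*(h'+1)) + 1 := by omega
      exact_mod_cast hle
    · intro v hv
      obtain ⟨a, ha, hva⟩ := DGHP.dir2 hG hmem hdiam' hslim' hconn x y p hplen v hv
      exact ⟨a, ha, by exact_mod_cast hva⟩
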